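/- arXiv:1704.08999 — 2 statements merged into one kernel-verified Lean document; each statement's English description precedes it below -/
import Mathlib

section
/- If f: ℝ^N → ℝ is a log-concave probability density function, then the function F(z) = ∫_{[z-1, z]} f(w) dw (the integral of f over the box with corners z - 1 and z, where 1 is the all-ones vector) is log-concave in z. -/
open MeasureTheory Set

/-- A nonnegative function is log-concave if
`f (θx + (1-θ)y) ≥ f x ^ θ * f y ^ (1-θ)` for all `x, y` and `θ ∈ (0,1)`. -/
def LogConcave {N : ℕ} (f : (Fin N → ℝ) → ℝ) : Prop :=
  (∀ x, 0 ≤ f x) ∧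
    ∀ x y θ, θ ∈ Set.Ioo (0 : ℝ) 1 →
      f x ^ θ * f y ^ (1 - θ) ≤ f (θ • x + (1 - θ) • y)

open scoped ENNReal
open Pointwise


lemma compact_add_meas (K L : Set ℝ) (hK : IsCompact K) (hL : IsCompact L)
    (hKne : K.Nonempty) (hLne : L.Nonempty) :
    volume K + volume L ≤ volume (K + L) := by
  set k := sSup K with hk
  set l := sInf L with hl
  have hkK : k ∈ K := hK.sSup_mem hKne
  have hlL : l ∈ L := hL.sInf_mem hLne
  have h1 : (l +ᵥ K) \ {k + l} ∪ (k +ᵥ L) ⊆ K + L := by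
    intro x hx
    rcases hx with hx | hx
    · rcases hx.1 with ⟨a, ha, rfl⟩
      exact ⟨a, ha, l, hlL, add_comm a l⟩
    · rcases hx with ⟨b, hb, rfl⟩
      exact ⟨k, hkK, b, hb, rfl⟩
  have hdisj : Disjoint ((l +ᵥ K) \ {k + l}) (k +ᵥ L) := by
    rw [Set.disjoint_left]
    rintro x ⟨⟨a, ha, rfl⟩, hne⟩ ⟨b, hb, heq⟩
    have hak : a ≤ k := le_csSup hK.bddAbove ha
    have hlb : l ≤ b := csInf_le hL.bddBelow hb
    apply hne
    have heq' : k + b = l + a := heq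
    have : l + a = k + l := by linarith
    simpa using this
  have hmeasL : MeasurableSet (k +ᵥ L) := hL.measurableSet.const_vadd k
  calc volume K + volume L
      = volume ((l +ᵥ K) \ {k + l}) + volume (k +ᵥ L) := by
        rw [measure_diff_null (measure_singleton _), measure_vadd, measure_vadd]
    _ = volume ((l +ᵥ K) \ {k + l} ∪ (k +ᵥ L)) := (measure_union hdisj hmeasL).symm
    _ ≤ volume (K + L) := measure_mono h1

lemma bm_one_dim (s t : Set ℝ) (hs : MeasurableSet s) (ht : MeasurableSet t)
    (hsne : s.Nonempty) (htne : t.Nonempty) :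
    volume s + volume t ≤ volume (s + t) := by
  have hsub1 : ∀ b ∈ t, b +ᵥ s ⊆ s + t := by
    rintro b hb x ⟨a, ha, rfl⟩
    exact ⟨a, ha, b, hb, add_comm a b⟩
  have hsub2 : ∀ a ∈ s, a +ᵥ t ⊆ s + t := by
    rintro a ha x ⟨b, hb, rfl⟩
    exact ⟨a, ha, b, hb, rfl⟩
  by_cases hsf : volume s = ∞
  · obtain ⟨b, hb⟩ := htne
    have h2 := (measure_vadd volume b s) ▸ measure_mono (hsub1 b hb)
    have htop : volume (s + t) = ⊤ := top_le_iff.mp (hsf ▸ h2)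
    simp [htop]
  by_cases htf : volume t = ∞
  · obtain ⟨a, ha⟩ := hsne
    have h2 := (measure_vadd volume a t) ▸ measure_mono (hsub2 a ha)
    have htop : volume (s + t) = ⊤ := top_le_iff.mp (htf ▸ h2)
    simp [htop]
  refine ENNReal.le_of_forall_pos_le_add fun ε hε _ => ?_
  have hε2 : ((ε : ℝ≥0∞) / 2) ≠ 0 := by simp [hε.ne']
  obtain ⟨K, hKs, hKc, hKm⟩ := hs.exists_isCompact_lt_add hsf hε2
  obtain ⟨L, hLt, hLc, hLm⟩ := ht.exists_isCompact_lt_add htf hε2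
  have hhalf : (ε : ℝ≥0∞) / 2 ≤ ε := ENNReal.half_le_self
  rcases K.eq_empty_or_nonempty with hKe | hKne
  · -- volume s < ε/2, use  s + t ⊇ a +ᵥ t
    obtain ⟨a, ha⟩ := hsne
    have h2 := (measure_vadd volume a t) ▸ measure_mono (hsub2 a ha)
    calc volume s + volume t ≤ ε/2 + volume (s + t) := by
          refine add_le_add ?_ h2
          simpa [hKe] using hKm.le
      _ ≤ volume (s + t) + ε := by rw [add_comm]; exact add_le_add_right hhalf _
  rcases L.eq_empty_or_nonempty with hLe | hLne
  · obtain ⟨b, hb⟩ := htne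
    have h2 := (measure_vadd volume b s) ▸ measure_mono (hsub1 b hb)
    calc volume s + volume t ≤ volume (s + t) + ε/2 := by
          refine add_le_add h2 ?_
          simpa [hLe] using hLm.le
      _ ≤ volume (s + t) + ε := add_le_add_right hhalf _
  have h1 : volume K + volume L ≤ volume (K + L) := compact_add_meas _ _ hKc hLc hKne hLne
  have h2 : volume (K + L) ≤ volume (s + t) := measure_mono (Set.add_subset_add hKs hLt)
  calc volume s + volume t ≤ (volume K + ε/2) + (volume L + ε/2) := add_le_add hKm.le hLm.le
    _ = (volume K + volume L) + (ε/2 + ε/2) := add_add_add_comm _ _ _ _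
    _ = volume K + volume L + ε := by rw [ENNReal.add_halves]
    _ ≤ volume (s + t) + ε := add_le_add_left (h1.trans h2) _


lemma vol_smul_one_dim (c : ℝ) (hc : 0 < c) (A : Set ℝ) :
    volume (c • A) = ENNReal.ofReal c * volume A := by
  rw [Measure.addHaar_smul volume c A, Module.finrank_self, pow_one, abs_of_pos hc]

lemma lintegral_Ioo_scale (F : ℝ → ℝ≥0∞) (hF : Measurable F) (c : ℝ) (hc : 0 < c) :
    ∫⁻ x in Ioo 0 c, F x = ENNReal.ofReal c * ∫⁻ s in Ioo (0:ℝ) 1, F (c * s) := by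
  have hmc : Measurable fun x : ℝ => c * x := measurable_const_mul c
  have hpre : (fun x : ℝ => c * x) ⁻¹' (Ioo 0 c) = Ioo 0 1 := by
    ext x
    simp only [mem_preimage, mem_Ioo]
    constructor
    · rintro ⟨h1, h2⟩
      constructor
      · nlinarith
      · nlinarith
    · rintro ⟨h1, h2⟩
      constructor
      · positivity
      · nlinarith
  have hmap : (Measure.map (fun x : ℝ => c * x) volume).restrict (Ioo 0 c)
      = Measure.map (fun x : ℝ => c * x) (volume.restrict (Ioo 0 1)) := by
    rw [Measure.restrict_map hmc measurableSet_Ioo, hpre]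
  have h1 : ∫⁻ s in Ioo (0:ℝ) 1, F (c * s)
      = ∫⁻ x, F x ∂((Measure.map (fun x : ℝ => c * x) volume).restrict (Ioo 0 c)) := by
    rw [hmap, lintegral_map hF hmc]
  rw [h1, Real.map_volume_mul_left hc.ne', Measure.restrict_smul, lintegral_smul_measure,
    smul_eq_mul, ← mul_assoc, ← ENNReal.ofReal_mul hc.le, abs_of_pos (by positivity),
    mul_inv_cancel₀ hc.ne', ENNReal.ofReal_one, one_mul]

lemma ennreal_geom_mean (θ : ℝ) (hθ : 0 < θ) (hθ1 : θ < 1) (x y : ℝ≥0∞) :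
    x ^ θ * y ^ (1 - θ) ≤ ENNReal.ofReal θ * x + ENNReal.ofReal (1 - θ) * y := by
  have hθ' : (0:ℝ) < 1 - θ := by linarith
  rcases eq_or_ne x ⊤ with rfl | hx
  · rcases eq_or_ne y 0 with rfl | hy
    · rw [ENNReal.zero_rpow_of_pos hθ', mul_zero]; exact zero_le
    · have : ENNReal.ofReal θ * ⊤ = ⊤ :=
        ENNReal.mul_top (by simp [ENNReal.ofReal_eq_zero]; linarith)
      rw [this]; simp
  rcases eq_or_ne y ⊤ with rfl | hy
  · rcases eq_or_ne x 0 with rfl | hx0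
    · rw [ENNReal.zero_rpow_of_pos hθ, zero_mul]; exact zero_le
    · have : ENNReal.ofReal (1 - θ) * ⊤ = ⊤ :=
        ENNReal.mul_top (by simp [ENNReal.ofReal_eq_zero]; linarith)
      rw [this]; simp
  lift x to NNReal using hx
  lift y to NNReal using hy
  have key := NNReal.geom_mean_le_arith_mean2_weighted (w₁ := θ.toNNReal)
    (w₂ := (1-θ).toNNReal) (p₁ := x) (p₂ := y) ?_
  · have hcθ : ((θ.toNNReal : ℝ)) = θ := Real.coe_toNNReal _ hθ.le
    have hcθ' : (((1-θ).toNNReal : ℝ)) = 1 - θ := Real.coe_toNNReal _ hθ'.le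
    rw [hcθ, hcθ'] at key
    calc (x:ℝ≥0∞) ^ θ * (y:ℝ≥0∞) ^ (1-θ)
        = ((x ^ θ * y ^ (1-θ) : NNReal) : ℝ≥0∞) := by
          rw [ENNReal.coe_mul, ENNReal.coe_rpow_of_nonneg _ hθ.le,
            ENNReal.coe_rpow_of_nonneg _ hθ'.le]
      _ ≤ ((θ.toNNReal * x + (1-θ).toNNReal * y : NNReal) : ℝ≥0∞) := by
          exact_mod_cast ENNReal.coe_le_coe.mpr key
      _ = ENNReal.ofReal θ * x + ENNReal.ofReal (1-θ) * y := by
          rw [ENNReal.coe_add, ENNReal.coe_mul, ENNReal.coe_mul]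
          rfl
  · have : ((θ.toNNReal + (1-θ).toNNReal : NNReal) : ℝ) = 1 := by
      rw [NNReal.coe_add, Real.coe_toNNReal _ hθ.le, Real.coe_toNNReal _ hθ'.le]; ring
    exact_mod_cast this

lemma rpow_iSup_le (u : ℕ → ℝ≥0∞) (θ : ℝ) (hθ : 0 < θ) :
    (⨆ n, u n) ^ θ ≤ ⨆ n, (u n) ^ θ := by
  have h1 : ∀ n, u n ≤ (⨆ n, (u n) ^ θ) ^ (1/θ) := by
    intro n
    have := ENNReal.rpow_le_rpow (le_iSup (fun n => (u n)^θ) n) (by positivity : (0:ℝ) ≤ 1/θ)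
    rwa [← ENNReal.rpow_mul, mul_one_div_cancel hθ.ne', ENNReal.rpow_one] at this
  have h2 : (⨆ n, u n) ≤ (⨆ n, (u n) ^ θ) ^ (1/θ) := iSup_le h1
  have := ENNReal.rpow_le_rpow h2 hθ.le
  rwa [← ENNReal.rpow_mul, one_div_mul_cancel hθ.ne', ENNReal.rpow_one] at this

lemma sup_geom_le (u v : ℕ → ℝ≥0∞) (hu : Monotone u) (hv : Monotone v)
    (θ : ℝ) (hθ : 0 < θ) (hθ1 : θ < 1) (S : ℝ≥0∞)
    (h : ∀ n, u n ^ θ * v n ^ (1 - θ) ≤ S) :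
    (⨆ n, u n) ^ θ * (⨆ n, v n) ^ (1 - θ) ≤ S := by
  have hθ' : (0:ℝ) < 1 - θ := by linarith
  calc (⨆ n, u n) ^ θ * (⨆ n, v n) ^ (1 - θ)
      ≤ (⨆ n, u n ^ θ) * (⨆ n, v n ^ (1-θ)) :=
        mul_le_mul' (rpow_iSup_le u θ hθ) (rpow_iSup_le v _ hθ')
    _ = ⨆ n, ⨆ m, u n ^ θ * v m ^ (1-θ) := by
        rw [ENNReal.iSup_mul]
        exact iSup_congr fun n => ENNReal.mul_iSup _ _
    _ ≤ S := by
        refine iSup_le fun n => iSup_le fun m => ?_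
        calc u n ^ θ * v m ^ (1-θ)
            ≤ u (max n m) ^ θ * v (max n m) ^ (1-θ) :=
              mul_le_mul' (ENNReal.rpow_le_rpow (hu (le_max_left n m)) hθ.le)
                (ENNReal.rpow_le_rpow (hv (le_max_right n m)) hθ'.le)
          _ ≤ S := h _


-- layer cake packaged for finite-valued measurable ENNReal functions
lemma layercake_ennreal (f : ℝ → ℝ≥0∞) (hf : Measurable f) (hfin : ∀ a, f a ≠ ⊤) :
    ∫⁻ a, f a = ∫⁻ t in Ioi (0:ℝ), volume {a | ENNReal.ofReal t < f a} := by
  have h1 : ∫⁻ a, f a = ∫⁻ a, ENNReal.ofReal ((f a).toReal) := by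
    refine lintegral_congr fun a => (ENNReal.ofReal_toReal (hfin a)).symm
  rw [h1, lintegral_eq_lintegral_meas_lt volume
    (ae_of_all _ fun a => ENNReal.toReal_nonneg) hf.ennreal_toReal.aemeasurable]
  refine setLIntegral_congr_fun measurableSet_Ioi (fun t ht => ?_)
  congr 1
  ext a
  simp only [mem_setOf_eq]
  rw [ENNReal.ofReal_lt_iff_lt_toReal (le_of_lt ht) (hfin a)]

lemma smul_set_measurable (c : ℝ) (hc : c ≠ 0) (A : Set ℝ) (hA : MeasurableSet A) :
    MeasurableSet (c • A) := by
  have : c • A = (fun x : ℝ => c⁻¹ • x) ⁻¹' A := by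
    ext x; rw [mem_preimage, ← mem_smul_set_iff_inv_smul_mem₀ hc]
  rw [this]
  exact hA.preimage (measurable_id.const_smul c⁻¹)

lemma pl_dim1_bounded (f g h : ℝ → ℝ≥0∞) (hf : Measurable f) (hg : Measurable g)
    (hh : Measurable h) (θ : ℝ) (hθ : 0 < θ) (hθ1 : θ < 1)
    (hfb : (⨆ a, f a) ≠ ⊤) (hgb : (⨆ b, g b) ≠ ⊤)
    (hyp : ∀ a b, f a ^ θ * g b ^ (1 - θ) ≤ h (θ * a + (1 - θ) * b)) :
    (∫⁻ a, f a) ^ θ * (∫⁻ b, g b) ^ (1 - θ) ≤ ∫⁻ u, h u := by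
  have hθ' : (0:ℝ) < 1 - θ := by linarith
  by_cases hIf : ∫⁻ a, f a = 0
  · rw [hIf, ENNReal.zero_rpow_of_pos hθ, zero_mul]; exact zero_le
  by_cases hIg : ∫⁻ b, g b = 0
  · rw [hIg, ENNReal.zero_rpow_of_pos hθ', mul_zero]; exact zero_le
  set M₁ := ⨆ a, f a with hM₁def
  set M₂ := ⨆ b, g b with hM₂def
  have hM₁ : M₁ ≠ 0 := by
    intro h0
    apply hIf
    have hz : ∀ a, f a = 0 := fun a => le_antisymm ((le_iSup f a).trans h0.le) zero_le
    simp [hz]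
  have hM₂ : M₂ ≠ 0 := by
    intro h0
    apply hIg
    have hz : ∀ b, g b = 0 := fun b => le_antisymm ((le_iSup g b).trans h0.le) zero_le
    simp [hz]
  set c₁ := M₁.toReal with hc₁def
  set c₂ := M₂.toReal with hc₂def
  have hc₁ : 0 < c₁ := ENNReal.toReal_pos hM₁ hfb
  have hc₂ : 0 < c₂ := ENNReal.toReal_pos hM₂ hgb
  have hfle : ∀ a, f a ≤ ENNReal.ofReal c₁ := by
    intro a; rw [hc₁def, ENNReal.ofReal_toReal hfb]; exact le_iSup f a
  have hgle : ∀ b, g b ≤ ENNReal.ofReal c₂ := by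
    intro b; rw [hc₂def, ENNReal.ofReal_toReal hgb]; exact le_iSup g b
  set C := c₁ ^ θ * c₂ ^ (1 - θ) with hCdef
  have hC : 0 < C := by positivity
  -- superlevel sets
  set Af : ℝ → Set ℝ := fun t => {a | ENNReal.ofReal t < f a} with hAfdef
  set Bg : ℝ → Set ℝ := fun t => {b | ENNReal.ofReal t < g b} with hBgdef
  set h' : ℝ → ℝ≥0∞ := fun u => min (h u) (ENNReal.ofReal C) with hh'def
  have hh' : Measurable h' := hh.min measurable_const
  have hh'fin : ∀ u, h' u ≠ ⊤ := fun u =>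
    ne_top_of_le_ne_top ENNReal.ofReal_ne_top (min_le_right _ _)
  set Ch : ℝ → Set ℝ := fun t => {u | ENNReal.ofReal t < h' u} with hChdef
  -- antitone measurable level-measure functions
  have hAf_anti : Antitone fun t => volume (Af t) := by
    intro t t' htt'
    exact measure_mono fun a ha => lt_of_le_of_lt (ENNReal.ofReal_le_ofReal htt') ha
  have hBg_anti : Antitone fun t => volume (Bg t) := by
    intro t t' htt'
    exact measure_mono fun a ha => lt_of_le_of_lt (ENNReal.ofReal_le_ofReal htt') ha
  have hCh_anti : Antitone fun t => volume (Ch t) := by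
    intro t t' htt'
    exact measure_mono fun a ha => lt_of_le_of_lt (ENNReal.ofReal_le_ofReal htt') ha
  have hAf_meas : Measurable fun t => volume (Af t) := hAf_anti.measurable
  have hBg_meas : Measurable fun t => volume (Bg t) := hBg_anti.measurable
  have hCh_meas : Measurable fun t => volume (Ch t) := hCh_anti.measurable
  -- layer cake identities
  have hf_fin : ∀ a, f a ≠ ⊤ := fun a =>
    ne_top_of_le_ne_top ENNReal.ofReal_ne_top (hfle a)
  have hg_fin : ∀ b, g b ≠ ⊤ := fun b =>
    ne_top_of_le_ne_top ENNReal.ofReal_ne_top (hgle b)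
  have hlf : ∫⁻ a, f a = ∫⁻ t in Ioi (0:ℝ), volume (Af t) := layercake_ennreal f hf hf_fin
  have hlg : ∫⁻ b, g b = ∫⁻ t in Ioi (0:ℝ), volume (Bg t) := layercake_ennreal g hg hg_fin
  have hlh : ∫⁻ u, h' u = ∫⁻ t in Ioi (0:ℝ), volume (Ch t) := layercake_ennreal h' hh' hh'fin
  -- vanishing beyond c₁
  have hAf_zero : ∀ t, c₁ ≤ t → volume (Af t) = 0 := by
    intro t htc
    have : Af t = ∅ := by
      ext a
      simp only [hAfdef, mem_setOf_eq, mem_empty_iff_false, iff_false, not_lt]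
      exact (hfle a).trans (ENNReal.ofReal_le_ofReal htc)
    simp [this]
  have hBg_zero : ∀ t, c₂ ≤ t → volume (Bg t) = 0 := by
    intro t htc
    have : Bg t = ∅ := by
      ext b
      simp only [hBgdef, mem_setOf_eq, mem_empty_iff_false, iff_false, not_lt]
      exact (hgle b).trans (ENNReal.ofReal_le_ofReal htc)
    simp [this]
  -- restrict layer cake to (0, c)
  have hsplit : ∀ (F : ℝ → ℝ≥0∞) (c : ℝ), 0 < c → Measurable F → (∀ t, c ≤ t → F t = 0) →
      ∫⁻ t in Ioi (0:ℝ), F t = ∫⁻ t in Ioo (0:ℝ) c, F t := by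
    intro F c hc hFm hF0
    have hun : Ioi (0:ℝ) = Ioo 0 c ∪ Ici c := by
      ext t; simp only [mem_Ioi, mem_union, mem_Ioo, mem_Ici]
      constructor
      · intro ht
        rcases lt_or_ge t c with h1 | h1
        · exact Or.inl ⟨ht, h1⟩
        · exact Or.inr h1
      · rintro (⟨h1, _⟩ | h1)
        · exact h1
        · linarith
    rw [hun, lintegral_union measurableSet_Ici (by
      rw [Set.disjoint_left]; rintro t ⟨_, h2⟩ h3; simp only [mem_Ici] at h3; linarith)]
    have hzero : ∫⁻ t in Ici c, F t = 0 := by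
      rw [setLIntegral_congr_fun measurableSet_Ici (fun t ht => hF0 t ht)]
      simp
    rw [hzero, add_zero]
  have hJf : ∫⁻ a, f a = ENNReal.ofReal c₁ * ∫⁻ s in Ioo (0:ℝ) 1, volume (Af (c₁ * s)) := by
    rw [hlf, hsplit _ c₁ hc₁ hAf_meas hAf_zero, lintegral_Ioo_scale _ hAf_meas c₁ hc₁]
  have hJg : ∫⁻ b, g b = ENNReal.ofReal c₂ * ∫⁻ s in Ioo (0:ℝ) 1, volume (Bg (c₂ * s)) := by
    rw [hlg, hsplit _ c₂ hc₂ hBg_meas hBg_zero, lintegral_Ioo_scale _ hBg_meas c₂ hc₂]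
  set Jf := ∫⁻ s in Ioo (0:ℝ) 1, volume (Af (c₁ * s)) with hJfdef
  set Jg := ∫⁻ s in Ioo (0:ℝ) 1, volume (Bg (c₂ * s)) with hJgdef
  -- main pointwise estimate on level measures
  have hmain : ∀ s ∈ Ioo (0:ℝ) 1,
      ENNReal.ofReal θ * volume (Af (c₁ * s)) + ENNReal.ofReal (1-θ) * volume (Bg (c₂ * s))
        ≤ volume (Ch (C * s)) := by
    rintro s ⟨hs0, hs1⟩
    have hAne : (Af (c₁ * s)).Nonempty := by
      have hlt : ENNReal.ofReal (c₁ * s) < ENNReal.ofReal c₁ := by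
        rw [ENNReal.ofReal_lt_ofReal_iff hc₁]
        nlinarith
      rw [ENNReal.ofReal_toReal hfb] at hlt
      rw [hM₁def, lt_iSup_iff] at hlt
      obtain ⟨a, ha⟩ := hlt
      exact ⟨a, ha⟩
    have hBne : (Bg (c₂ * s)).Nonempty := by
      have hlt : ENNReal.ofReal (c₂ * s) < ENNReal.ofReal c₂ := by
        rw [ENNReal.ofReal_lt_ofReal_iff hc₂]
        nlinarith
      rw [ENNReal.ofReal_toReal hgb] at hlt
      rw [hM₂def, lt_iSup_iff] at hlt
      obtain ⟨b, hb⟩ := hlt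
      exact ⟨b, hb⟩
    have hAm : MeasurableSet (Af (c₁ * s)) := measurableSet_lt measurable_const hf
    have hBm : MeasurableSet (Bg (c₂ * s)) := measurableSet_lt measurable_const hg
    have hsubset : θ • Af (c₁ * s) + (1 - θ) • Bg (c₂ * s) ⊆ Ch (C * s) := by
      rintro x ⟨u, ⟨a, ha, rfl⟩, v, ⟨b, hb, rfl⟩, rfl⟩
      simp only [hChdef, mem_setOf_eq, smul_eq_mul]
      have hfa : ENNReal.ofReal (c₁ * s) < f a := ha
      have hgb' : ENNReal.ofReal (c₂ * s) < g b := hb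
      have hstep : ENNReal.ofReal (C * s) < f a ^ θ * g b ^ (1 - θ) := by
        have e1 : ENNReal.ofReal (C * s) =
            ENNReal.ofReal (c₁ * s) ^ θ * ENNReal.ofReal (c₂ * s) ^ (1 - θ) := by
          rw [ENNReal.ofReal_rpow_of_pos (by positivity),
            ENNReal.ofReal_rpow_of_pos (by positivity),
            ← ENNReal.ofReal_mul (by positivity)]
          congr 1
          rw [Real.mul_rpow hc₁.le hs0.le, Real.mul_rpow hc₂.le hs0.le]
          have : s ^ θ * s ^ (1 - θ) = s := by
            rw [← Real.rpow_add hs0]; simp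
          rw [hCdef]; nlinarith [this]
        rw [e1]
        exact ENNReal.mul_lt_mul (ENNReal.rpow_lt_rpow hfa hθ)
          (ENNReal.rpow_lt_rpow hgb' hθ')
      have hhx : ENNReal.ofReal (C * s) < h (θ * a + (1 - θ) * b) :=
        lt_of_lt_of_le hstep (hyp a b)
      refine lt_min hhx ?_
      exact (ENNReal.ofReal_lt_ofReal_iff hC).mpr (by nlinarith)
    calc ENNReal.ofReal θ * volume (Af (c₁ * s)) + ENNReal.ofReal (1-θ) * volume (Bg (c₂ * s))
        = volume (θ • Af (c₁ * s)) + volume ((1-θ) • Bg (c₂ * s)) := by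
          rw [vol_smul_one_dim θ hθ, vol_smul_one_dim (1-θ) hθ']
      _ ≤ volume (θ • Af (c₁ * s) + (1-θ) • Bg (c₂ * s)) :=
          bm_one_dim _ _ (smul_set_measurable θ hθ.ne' _ hAm)
            (smul_set_measurable (1-θ) hθ'.ne' _ hBm)
            (hAne.smul_set) (hBne.smul_set)
      _ ≤ volume (Ch (C * s)) := measure_mono hsubset
  -- assemble
  have hA' : Antitone fun s : ℝ => volume (Af (c₁ * s)) :=
    fun s t hst => hAf_anti (mul_le_mul_of_nonneg_left hst hc₁.le)
  have hB' : Antitone fun s : ℝ => volume (Bg (c₂ * s)) :=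
    fun s t hst => hBg_anti (mul_le_mul_of_nonneg_left hst hc₂.le)
  have hC' : Antitone fun s : ℝ => volume (Ch (C * s)) :=
    fun s t hst => hCh_anti (mul_le_mul_of_nonneg_left hst hC.le)
  have hest : ENNReal.ofReal C * (ENNReal.ofReal θ * Jf + ENNReal.ofReal (1-θ) * Jg)
      ≤ ∫⁻ u, h u := by
    have h1 : ∫⁻ u, h' u ≤ ∫⁻ u, h u := lintegral_mono fun u => min_le_left _ _
    have h2 : ∫⁻ t in Ioi (0:ℝ), volume (Ch t) ≥ ∫⁻ t in Ioo (0:ℝ) C, volume (Ch t) :=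
      lintegral_mono_set fun t ht => ht.1
    have h3 : ∫⁻ t in Ioo (0:ℝ) C, volume (Ch t)
        = ENNReal.ofReal C * ∫⁻ s in Ioo (0:ℝ) 1, volume (Ch (C * s)) :=
      lintegral_Ioo_scale _ hCh_meas C hC
    have h4 : ∫⁻ s in Ioo (0:ℝ) 1,
        (ENNReal.ofReal θ * volume (Af (c₁ * s)) + ENNReal.ofReal (1-θ) * volume (Bg (c₂ * s)))
        ≤ ∫⁻ s in Ioo (0:ℝ) 1, volume (Ch (C * s)) := by
      exact setLIntegral_mono hC'.measurable hmain
    have h5 : ∫⁻ s in Ioo (0:ℝ) 1,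
        (ENNReal.ofReal θ * volume (Af (c₁ * s)) + ENNReal.ofReal (1-θ) * volume (Bg (c₂ * s)))
        = ENNReal.ofReal θ * Jf + ENNReal.ofReal (1-θ) * Jg := by
      rw [lintegral_add_left (hA'.measurable.const_mul _),
        lintegral_const_mul _ hA'.measurable, lintegral_const_mul _ hB'.measurable]
    calc ENNReal.ofReal C * (ENNReal.ofReal θ * Jf + ENNReal.ofReal (1-θ) * Jg)
        = ENNReal.ofReal C * ∫⁻ s in Ioo (0:ℝ) 1,
            (ENNReal.ofReal θ * volume (Af (c₁ * s)) + ENNReal.ofReal (1-θ) * volume (Bg (c₂ * s))) := by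
          rw [h5]
      _ ≤ ENNReal.ofReal C * ∫⁻ s in Ioo (0:ℝ) 1, volume (Ch (C * s)) :=
          mul_le_mul_right h4 _
      _ = ∫⁻ t in Ioo (0:ℝ) C, volume (Ch t) := h3.symm
      _ ≤ ∫⁻ t in Ioi (0:ℝ), volume (Ch t) := h2
      _ = ∫⁻ u, h' u := hlh.symm
      _ ≤ ∫⁻ u, h u := h1
  -- final algebra
  have hgm : Jf ^ θ * Jg ^ (1-θ) ≤ ENNReal.ofReal θ * Jf + ENNReal.ofReal (1-θ) * Jg :=
    ennreal_geom_mean θ hθ hθ1 Jf Jg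
  have halg : (∫⁻ a, f a) ^ θ * (∫⁻ b, g b) ^ (1-θ)
      = ENNReal.ofReal C * (Jf ^ θ * Jg ^ (1-θ)) := by
    rw [hJf, hJg, ENNReal.mul_rpow_of_nonneg _ _ hθ.le, ENNReal.mul_rpow_of_nonneg _ _ hθ'.le,
      ENNReal.ofReal_rpow_of_pos hc₁, ENNReal.ofReal_rpow_of_pos hc₂, hCdef,
      ENNReal.ofReal_mul (by positivity)]
    ring
  rw [halg]
  exact le_trans (mul_le_mul_right hgm _) hest


lemma isup_min_nat (x : ℝ≥0∞) : ⨆ n : ℕ, min x (n : ℝ≥0∞) = x := by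
  apply le_antisymm (iSup_le fun n => min_le_left _ _)
  rcases eq_or_ne x ⊤ with rfl | hx
  · simp only [min_top_left, top_le_iff]
    exact ENNReal.iSup_natCast
  · obtain ⟨n, hn⟩ := ENNReal.exists_nat_gt hx
    calc x = min x n := (min_eq_left hn.le).symm
      _ ≤ ⨆ n : ℕ, min x (n:ℝ≥0∞) := le_iSup (fun n : ℕ => min x (n:ℝ≥0∞)) n

lemma pl_dim1 (f g h : ℝ → ℝ≥0∞) (hf : Measurable f) (hg : Measurable g)
    (hh : Measurable h) (θ : ℝ) (hθ : 0 < θ) (hθ1 : θ < 1)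
    (hyp : ∀ a b, f a ^ θ * g b ^ (1 - θ) ≤ h (θ * a + (1 - θ) * b)) :
    (∫⁻ a, f a) ^ θ * (∫⁻ b, g b) ^ (1 - θ) ≤ ∫⁻ u, h u := by
  set fn : ℕ → ℝ → ℝ≥0∞ := fun n a => min (f a) n with hfn
  set gn : ℕ → ℝ → ℝ≥0∞ := fun n b => min (g b) n with hgn
  have hfnm : ∀ n, Measurable (fn n) := fun n => hf.min measurable_const
  have hgnm : ∀ n, Measurable (gn n) := fun n => hg.min measurable_const
  have hfmono : Monotone fn := fun n m hnm a =>
    min_le_min le_rfl (by exact_mod_cast Nat.cast_le.mpr hnm)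
  have hgmono : Monotone gn := fun n m hnm a =>
    min_le_min le_rfl (by exact_mod_cast Nat.cast_le.mpr hnm)
  have hkey : ∀ n, (∫⁻ a, fn n a) ^ θ * (∫⁻ b, gn n b) ^ (1-θ) ≤ ∫⁻ u, h u := by
    intro n
    refine pl_dim1_bounded (fn n) (gn n) h (hfnm n) (hgnm n) hh θ hθ hθ1 ?_ ?_ ?_
    · exact ne_top_of_le_ne_top (ENNReal.natCast_ne_top n)
        (iSup_le fun a => min_le_right _ _)
    · exact ne_top_of_le_ne_top (ENNReal.natCast_ne_top n)
        (iSup_le fun b => min_le_right _ _)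
    · intro a b
      calc fn n a ^ θ * gn n b ^ (1-θ)
          ≤ f a ^ θ * g b ^ (1-θ) :=
            mul_le_mul' (ENNReal.rpow_le_rpow (min_le_left _ _) hθ.le)
              (ENNReal.rpow_le_rpow (min_le_left _ _) (by linarith))
        _ ≤ h (θ * a + (1-θ) * b) := hyp a b
  have hIf : ∫⁻ a, f a = ⨆ n, ∫⁻ a, fn n a := by
    rw [← lintegral_iSup hfnm hfmono]
    exact lintegral_congr fun a => (isup_min_nat (f a)).symm
  have hIg : ∫⁻ b, g b = ⨆ n, ∫⁻ b, gn n b := by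
    rw [← lintegral_iSup hgnm hgmono]
    exact lintegral_congr fun b => (isup_min_nat (g b)).symm
  rw [hIf, hIg]
  exact sup_geom_le _ _ (fun n m hnm => lintegral_mono (hfmono hnm))
    (fun n m hnm => lintegral_mono (hgmono hnm)) θ hθ hθ1 _ hkey

lemma measurable_finCons (n : ℕ) :
    Measurable fun z : ℝ × (Fin n → ℝ) => (Fin.cons z.1 z.2 : Fin (n+1) → ℝ) := by
  refine measurable_pi_iff.mpr fun i => ?_
  refine Fin.cases ?_ (fun j => ?_) i
  · simpa using measurable_fst
  · simpa [Function.comp_def] using (measurable_pi_apply j).comp measurable_snd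

lemma smul_add_cons (n : ℕ) (θ : ℝ) (a b : ℝ) (x y : Fin n → ℝ) :
    θ • (Fin.cons a x : Fin (n+1) → ℝ) + (1 - θ) • (Fin.cons b y : Fin (n+1) → ℝ)
      = Fin.cons (θ * a + (1 - θ) * b) (θ • x + (1 - θ) • y) := by
  funext i
  refine Fin.cases ?_ (fun j => ?_) i <;> simp

lemma lintegral_cons (n : ℕ) (f : (Fin (n+1) → ℝ) → ℝ≥0∞) (hf : Measurable f) :
    ∫⁻ w, f w = ∫⁻ x : Fin n → ℝ, ∫⁻ s : ℝ, f (Fin.cons s x) := by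
  have mp := MeasureTheory.volume_preserving_piFinSuccAbove (fun _ : Fin (n+1) => ℝ) 0
  have h1 : ∫⁻ w, f w = ∫⁻ z : ℝ × (Fin n → ℝ), f (Fin.cons z.1 z.2) := by
    rw [← (MeasurePreserving.symm _ mp).lintegral_comp hf]
    congr 1
    funext z
    congr 1
    show (MeasurableEquiv.piFinSuccAbove (fun _ : Fin (n+1) => ℝ) 0).symm z = _
    simp [MeasurableEquiv.piFinSuccAbove, Fin.consEquiv]
  rw [h1]
  have hm : Measurable fun z : ℝ × (Fin n → ℝ) => f (Fin.cons z.1 z.2) :=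
    hf.comp (measurable_finCons n)
  rw [show (volume : Measure (ℝ × (Fin n → ℝ))) = (volume : Measure ℝ).prod volume from rfl,
    lintegral_prod _ hm.aemeasurable]
  exact lintegral_lintegral_swap hm.aemeasurable

lemma pl_dim : ∀ (n : ℕ) (f g h : (Fin n → ℝ) → ℝ≥0∞), Measurable f → Measurable g →
    Measurable h → ∀ θ : ℝ, 0 < θ → θ < 1 →
    (∀ a b, f a ^ θ * g b ^ (1 - θ) ≤ h (θ • a + (1 - θ) • b)) →
    (∫⁻ a, f a) ^ θ * (∫⁻ b, g b) ^ (1 - θ) ≤ ∫⁻ u, h u := by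
  intro n
  induction n with
  | zero =>
    intro f g h hf hg hh θ hθ hθ1 hyp
    set d : Fin 0 → ℝ := fun a => isEmptyElim a with hd
    have hvol : (volume : Measure (Fin 0 → ℝ)) = Measure.dirac d := by
      rw [volume_pi, Measure.pi_of_empty]
    rw [hvol, lintegral_dirac' _ hf, lintegral_dirac' _ hg, lintegral_dirac' _ hh]
    have h2 := hyp d d
    have he : θ • d + (1-θ) • d = d := Subsingleton.elim _ _
    rwa [he] at h2
  | succ n IH =>
    intro f g h hf hg hh θ hθ hθ1 hyp
    set F : (Fin n → ℝ) → ℝ≥0∞ := fun x => ∫⁻ s : ℝ, f (Fin.cons s x) with hF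
    set G : (Fin n → ℝ) → ℝ≥0∞ := fun y => ∫⁻ s : ℝ, g (Fin.cons s y) with hG
    set H : (Fin n → ℝ) → ℝ≥0∞ := fun w => ∫⁻ s : ℝ, h (Fin.cons s w) with hH
    have hFm : Measurable F := by
      apply Measurable.lintegral_prod_right (f := fun x (s:ℝ) => f (Fin.cons s x))
      exact hf.comp ((measurable_finCons n).comp (measurable_snd.prodMk measurable_fst))
    have hGm : Measurable G := by
      apply Measurable.lintegral_prod_right (f := fun x (s:ℝ) => g (Fin.cons s x))
      exact hg.comp ((measurable_finCons n).comp (measurable_snd.prodMk measurable_fst))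
    have hHm : Measurable H := by
      apply Measurable.lintegral_prod_right (f := fun x (s:ℝ) => h (Fin.cons s x))
      exact hh.comp ((measurable_finCons n).comp (measurable_snd.prodMk measurable_fst))
    have hpt : ∀ x y, F x ^ θ * G y ^ (1-θ) ≤ H (θ • x + (1-θ) • y) := by
      intro x y
      refine pl_dim1 (fun s => f (Fin.cons s x)) (fun s => g (Fin.cons s y))
        (fun s => h (Fin.cons s (θ • x + (1-θ) • y))) ?_ ?_ ?_ θ hθ hθ1 ?_
      · exact hf.comp ((measurable_finCons n).comp (measurable_id.prodMk measurable_const))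
      · exact hg.comp ((measurable_finCons n).comp (measurable_id.prodMk measurable_const))
      · exact hh.comp ((measurable_finCons n).comp (measurable_id.prodMk measurable_const))
      · intro a b
        have := hyp (Fin.cons a x) (Fin.cons b y)
        rwa [smul_add_cons] at this
    have := IH F G H hFm hGm hHm θ hθ hθ1 hpt
    rwa [← lintegral_cons n f hf, ← lintegral_cons n g hg, ← lintegral_cons n h hh] at this


lemma box_combo {N : ℕ} (θ : ℝ) (hθ0 : 0 < θ) (hθ1 : θ < 1) (x y a b : Fin N → ℝ)
    (ha : a ∈ Icc (x - 1) x) (hb : b ∈ Icc (y - 1) y) :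
    θ • a + (1 - θ) • b ∈ Icc ((θ • x + (1 - θ) • y) - 1) (θ • x + (1 - θ) • y) := by
  rw [mem_Icc] at ha hb ⊢
  obtain ⟨ha1, ha2⟩ := ha
  obtain ⟨hb1, hb2⟩ := hb
  constructor <;> intro i <;>
    [have h1 := ha1 i; have h1 := ha2 i] <;>
    [have h2 := hb1 i; have h2 := hb2 i] <;>
    simp only [Pi.add_apply, Pi.sub_apply, Pi.smul_apply, Pi.one_apply, smul_eq_mul] at * <;>
    nlinarith


/-- If `f` is a log-concave probability density on `ℝ^N`, then
`F z = ∫_{[z-1,z]} f` is log-concave in `z`. -/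
theorem logConcave_box_integral {N : ℕ} (f : (Fin N → ℝ) → ℝ)
    (hf : LogConcave f) (hint : Integrable f) (hprob : ∫ x, f x = 1) :
    LogConcave (fun z => ∫ w in Set.Icc (z - 1) z, f w) := by
  classical
  constructor
  · intro z
    exact setIntegral_nonneg measurableSet_Icc fun w _ => hf.1 w
  intro x y θ hθmem
  obtain ⟨hθ0, hθ1⟩ := hθmem
  simp only []
  set z := θ • x + (1 - θ) • y with hz
  -- measurable modification of f
  have hsm : AEStronglyMeasurable f volume := hint.1
  set fm := hsm.mk f with hfmdef
  have hfmm : Measurable fm := hsm.stronglyMeasurable_mk.measurable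
  have hae : f =ᵐ[volume] fm := hsm.ae_eq_mk
  have hnull : volume {a | f a ≠ fm a} = 0 := hae
  set E := toMeasurable volume {a | f a ≠ fm a} with hEdef
  have hEm : MeasurableSet E := measurableSet_toMeasurable _ _
  have hE0 : volume E = 0 := by rw [measure_toMeasurable]; exact hnull
  have hsubE : ∀ a, f a ≠ fm a → a ∈ E := fun a ha => subset_toMeasurable _ _ ha
  have haeE : ∀ᵐ a ∂(volume : Measure (Fin N → ℝ)), a ∉ E := by
    rw [ae_iff]
    simpa using hE0
  -- the three ENNReal-valued functions
  set fl : (Fin N → ℝ) → ℝ≥0∞ := E.piecewise (fun _ => 0)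
    ((Icc (x - 1) x).indicator fun a => ENNReal.ofReal (fm a)) with hfl
  set gl : (Fin N → ℝ) → ℝ≥0∞ := E.piecewise (fun _ => 0)
    ((Icc (y - 1) y).indicator fun a => ENNReal.ofReal (fm a)) with hgl
  set hu : (Fin N → ℝ) → ℝ≥0∞ := E.piecewise (fun _ => ⊤)
    ((Icc (z - 1) z).indicator fun a => ENNReal.ofReal (fm a)) with hhu
  have hflm : Measurable fl := Measurable.piecewise hEm measurable_const
    ((ENNReal.measurable_ofReal.comp hfmm).indicator measurableSet_Icc)
  have hglm : Measurable gl := Measurable.piecewise hEm measurable_const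
    ((ENNReal.measurable_ofReal.comp hfmm).indicator measurableSet_Icc)
  have hhum : Measurable hu := Measurable.piecewise hEm measurable_const
    ((ENNReal.measurable_ofReal.comp hfmm).indicator measurableSet_Icc)
  -- pointwise hypothesis
  have hθ1' : (0:ℝ) < 1 - θ := by linarith
  have hyp : ∀ a b, fl a ^ θ * gl b ^ (1 - θ) ≤ hu (θ • a + (1 - θ) • b) := by
    intro a b
    by_cases haE : a ∈ E
    · rw [hfl, Set.piecewise_eq_of_mem _ _ _ haE, ENNReal.zero_rpow_of_pos hθ0, zero_mul]
      exact zero_le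
    by_cases hbE : b ∈ E
    · rw [hgl, Set.piecewise_eq_of_mem _ _ _ hbE, ENNReal.zero_rpow_of_pos hθ1', mul_zero]
      exact zero_le
    rw [hfl, Set.piecewise_eq_of_notMem _ _ _ haE, hgl, Set.piecewise_eq_of_notMem _ _ _ hbE]
    by_cases hax : a ∈ Icc (x - 1) x
    swap
    · rw [Set.indicator_of_notMem hax, ENNReal.zero_rpow_of_pos hθ0, zero_mul]
      exact zero_le
    by_cases hby : b ∈ Icc (y - 1) y
    swap
    · rw [Set.indicator_of_notMem hby, ENNReal.zero_rpow_of_pos hθ1', mul_zero]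
      exact zero_le
    rw [Set.indicator_of_mem hax, Set.indicator_of_mem hby]
    set c := θ • a + (1 - θ) • b with hc
    by_cases hcE : c ∈ E
    · rw [hhu, Set.piecewise_eq_of_mem _ _ _ hcE]
      exact le_top
    have hcz : c ∈ Icc (z - 1) z := box_combo θ hθ0 hθ1 x y a b hax hby
    rw [hhu, Set.piecewise_eq_of_notMem _ _ _ hcE, Set.indicator_of_mem hcz]
    have hfa' : f a = fm a := by
      by_contra hne
      exact haE (hsubE a hne)
    have hfb' : f b = fm b := by
      by_contra hne
      exact hbE (hsubE b hne)
    have hfc' : f c = fm c := by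
      by_contra hne
      exact hcE (hsubE c hne)
    rw [← hfa', ← hfb', ← hfc']
    calc ENNReal.ofReal (f a) ^ θ * ENNReal.ofReal (f b) ^ (1 - θ)
        = ENNReal.ofReal (f a ^ θ) * ENNReal.ofReal (f b ^ (1 - θ)) := by
          rw [ENNReal.ofReal_rpow_of_nonneg (hf.1 a) hθ0.le,
            ENNReal.ofReal_rpow_of_nonneg (hf.1 b) hθ1'.le]
      _ = ENNReal.ofReal (f a ^ θ * f b ^ (1 - θ)) := by
          rw [← ENNReal.ofReal_mul (Real.rpow_nonneg (hf.1 a) θ)]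
      _ ≤ ENNReal.ofReal (f c) := ENNReal.ofReal_le_ofReal (hf.2 a b θ ⟨hθ0, hθ1⟩)
  -- apply Prekopa-Leindler
  have hmain := pl_dim N fl gl hu hflm hglm hhum θ hθ0 hθ1 hyp
  -- identify the lintegrals
  set Ix := ∫⁻ a in Icc (x - 1) x, ENNReal.ofReal (f a) with hIxdef
  set Iy := ∫⁻ a in Icc (y - 1) y, ENNReal.ofReal (f a) with hIydef
  set Iz := ∫⁻ a in Icc (z - 1) z, ENNReal.ofReal (f a) with hIzdef
  have hcongr : ∀ (s : Set (Fin N → ℝ)), MeasurableSet s →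
      ∫⁻ a, E.piecewise (fun _ => (0:ℝ≥0∞)) (s.indicator fun a => ENNReal.ofReal (fm a)) a
        = ∫⁻ a in s, ENNReal.ofReal (f a) := by
    intro s hs
    rw [← lintegral_indicator hs]
    refine lintegral_congr_ae ?_
    filter_upwards [haeE, hae] with a haE hfa
    rw [Set.piecewise_eq_of_notMem _ _ _ haE]
    rcases em (a ∈ s) with h1 | h1
    · rw [Set.indicator_of_mem h1, Set.indicator_of_mem h1, hfa]
    · rw [Set.indicator_of_notMem h1, Set.indicator_of_notMem h1]
  have hIfl : ∫⁻ a, fl a = Ix := hcongr _ measurableSet_Icc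
  have hIgl : ∫⁻ a, gl a = Iy := hcongr _ measurableSet_Icc
  have hIhu : ∫⁻ a, hu a = Iz := by
    rw [hIzdef, ← lintegral_indicator measurableSet_Icc]
    refine lintegral_congr_ae ?_
    filter_upwards [haeE, hae] with a haE hfa
    rw [hhu, Set.piecewise_eq_of_notMem _ _ _ haE]
    rcases em (a ∈ Icc (z - 1) z) with h1 | h1
    · rw [Set.indicator_of_mem h1, Set.indicator_of_mem h1, hfa]
    · rw [Set.indicator_of_notMem h1, Set.indicator_of_notMem h1]
  rw [hIfl, hIgl, hIhu] at hmain
  -- finiteness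
  have hfin : ∫⁻ a, ENNReal.ofReal (f a) < ⊤ := by
    calc ∫⁻ a, ENNReal.ofReal (f a) ≤ ∫⁻ a, (‖f a‖₊ : ℝ≥0∞) :=
          lintegral_mono fun a => Real.ofReal_le_enorm (f a)
      _ < ⊤ := hint.2
  have hIzfin : Iz ≠ ⊤ := by
    refine ne_top_of_le_ne_top hfin.ne ?_
    rw [hIzdef, ← lintegral_indicator measurableSet_Icc]
    exact lintegral_mono fun a => Set.indicator_le_self _ _ a
  -- convert to Bochner integrals
  have hconv : ∀ (s : Set (Fin N → ℝ)), MeasurableSet s →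
      ∫ w in s, f w = (∫⁻ a in s, ENNReal.ofReal (f a)).toReal := by
    intro s hs
    rw [integral_eq_lintegral_of_nonneg_ae (ae_of_all _ fun w => hf.1 w) (hint.1.restrict)]
  rw [hconv _ measurableSet_Icc, hconv _ measurableSet_Icc, hconv _ measurableSet_Icc,
    ENNReal.toReal_rpow, ENNReal.toReal_rpow, ← ENNReal.toReal_mul]
  exact ENNReal.toReal_mono hIzfin hmain
end

section
/- In a radial (tree) distribution network, the matrix R defined by R_{ik} = Σ_{(h,l) ∈ P_i ∩ P_k} r_{hl}, where P_i is the set of edges on the unique path from the root to node i and r_{hl} > 0 are edge weights, is symmetric positive definite. -/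
open Matrix

/-- In a tree network rooted at bus `0` with nodes numbered so that every edge on the path
to node `j` has index at most `j` (edge `i` being the edge directly above node `i`, so
`i ∈ P i`), the matrix `R_{ik} = Σ_{e ∈ P_i ∩ P_k} r_e` with positive edge weights is
symmetric positive definite. -/
theorem tree_path_matrix_posDef {N : ℕ} (P : Fin N → Finset (Fin N))
    (h_self : ∀ i, i ∈ P i) (h_order : ∀ i j, i ∈ P j → i ≤ j)
    (h_path : ∀ i j, i ∈ P j → P i ⊆ P j)
    (r : Fin N → ℝ) (hr : ∀ e, 0 < r e) :
    (Matrix.of fun i k : Fin N => ∑ e ∈ P i ∩ P k, r e).PosDef := by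
  classical
  rw [Matrix.posDef_iff_dotProduct_mulVec]
  constructor
  · ext i k
    simp [Matrix.conjTranspose_apply, Finset.inter_comm]
  · intro x hx
    set f : Fin N → ℝ := fun e => ∑ i ∈ Finset.univ.filter (fun i => e ∈ P i), x i with hf
    have hterm : ∀ e : Fin N, r e * f e ^ 2
        = ∑ i, ∑ k, x i * ((if e ∈ P i ∧ e ∈ P k then r e else 0) * x k) := by
      intro e
      rw [hf]
      simp only [Finset.sum_filter]
      rw [sq, Finset.sum_mul_sum, Finset.mul_sum]
      refine Finset.sum_congr rfl fun i _ => ?_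
      rw [Finset.mul_sum]
      refine Finset.sum_congr rfl fun k _ => ?_
      by_cases h1 : e ∈ P i <;> by_cases h2 : e ∈ P k <;> simp [h1, h2] <;> ring
    have hL : star x ⬝ᵥ ((Matrix.of fun i k : Fin N => ∑ e ∈ P i ∩ P k, r e) *ᵥ x)
        = ∑ i, ∑ k, ∑ e : Fin N, x i * ((if e ∈ P i ∧ e ∈ P k then r e else 0) * x k) := by
      simp only [dotProduct, Matrix.mulVec, Matrix.of_apply, star_trivial,
        Pi.star_apply]
      refine Finset.sum_congr rfl fun i _ => ?_
      rw [Finset.mul_sum]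
      refine Finset.sum_congr rfl fun k _ => ?_
      have : (∑ e ∈ P i ∩ P k, r e) = ∑ e : Fin N, if e ∈ P i ∧ e ∈ P k then r e else 0 := by
        rw [← Finset.sum_filter]
        congr 1
        ext e
        simp [Finset.mem_inter]
      rw [this, Finset.sum_mul, Finset.mul_sum]
    have key : star x ⬝ᵥ ((Matrix.of fun i k : Fin N => ∑ e ∈ P i ∩ P k, r e) *ᵥ x)
        = ∑ e : Fin N, r e * f e ^ 2 := by
      rw [hL]
      have h1 : (∑ i : Fin N, ∑ k : Fin N, ∑ e : Fin N,
            x i * ((if e ∈ P i ∧ e ∈ P k then r e else 0) * x k))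
          = ∑ i : Fin N, ∑ e : Fin N, ∑ k : Fin N,
            x i * ((if e ∈ P i ∧ e ∈ P k then r e else 0) * x k) :=
        Finset.sum_congr rfl fun i _ => Finset.sum_comm
      rw [h1, Finset.sum_comm]
      exact Finset.sum_congr rfl fun e _ => (hterm e).symm
    rw [key]
    -- find the largest index with x nonzero
    have hS : (Finset.univ.filter (fun i => x i ≠ 0)).Nonempty := by
      rcases Function.ne_iff.mp hx with ⟨j, hj⟩
      exact ⟨j, Finset.mem_filter.mpr ⟨Finset.mem_univ j, by simpa using hj⟩⟩
    set j := (Finset.univ.filter (fun i => x i ≠ 0)).max' hS with hjdef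
    have hjmem := (Finset.univ.filter (fun i => x i ≠ 0)).max'_mem hS
    have hxj : x j ≠ 0 := (Finset.mem_filter.mp hjmem).2
    have hfj : f j = x j := by
      rw [hf]
      refine Finset.sum_eq_single_of_mem j (by simp [h_self j]) fun i hi hne => ?_
      by_contra hxi
      have hji : j ≤ i := h_order j i (Finset.mem_filter.mp hi).2
      have hij : i ≤ j := Finset.le_max' _ i (by simp [hxi])
      exact hne (le_antisymm hij hji)
    refine Finset.sum_pos' (fun e _ => mul_nonneg (hr e).le (sq_nonneg _)) ⟨j, Finset.mem_univ j, ?_⟩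
    rw [hfj]
    have : 0 < x j ^ 2 := by positivity
    exact mul_pos (hr j) this
end
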